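/- For every composition λ of n and every 0 ≤ m ≤ n, one has L̄_λ(m) = L̄_λ(n−m). -/

import Mathlib

/-- A word (list of letters) is primitive if it is not a nontrivial power `q^r` (`r > 1`)
of a strictly shorter word `q`. -/
def IsPrimitiveWord (s : List ℕ) : Prop :=
  ¬ ∃ (q : List ℕ) (r : ℕ), 1 < r ∧ q.length < s.length ∧ s = (List.replicate r q).flatten

/-- Necklaces: words up to cyclic rotation. -/
abbrev Necklace : Type := Quotient (List.IsRotated.setoid ℕ)

/-- `o(s)`: the number of odd letters of the word `s`. -/
def oddCount (s : List ℕ) : ℕ := s.countP (fun x => x % 2 = 1)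

/-- Membership condition for `N_λ`: `s` is a word of length `n` on the alphabet
`{0,…,2k-1}` with `a_{2t}(s) + a_{2t+1}(s) = λ_{t+1}` for all `0 ≤ t ≤ k-1`, and `s` is either
primitive or of the form `q²` with `q` primitive and `o(q)` odd. -/
def MemN (n k : ℕ) (l : List ℕ) (s : List ℕ) : Prop :=
  s.length = n ∧ (∀ c ∈ s, c < 2 * k) ∧
    (∀ t < k, s.count (2 * t) + s.count (2 * t + 1) = l.getD t 0) ∧
    (IsPrimitiveWord s ∨ ∃ q : List ℕ, s = q ++ q ∧ IsPrimitiveWord q ∧ Odd (oddCount q))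

/-- `|N_λ^{(m)}|`: the number of necklaces in `N_λ` with exactly `m` odd letters. -/
noncomputable def cardN (n k : ℕ) (l : List ℕ) (m : ℕ) : ℕ :=
  Nat.card {x : Necklace // ∃ s : List ℕ, Quotient.mk (List.IsRotated.setoid ℕ) s = x ∧
    MemN n k l s ∧ oddCount s = m}

/-- `L̄_λ(m)`: the number of primitive necklaces in `N_λ^{(m)}`. -/
noncomputable def cardLbar (n k : ℕ) (l : List ℕ) (m : ℕ) : ℕ :=
  Nat.card {x : Necklace // ∃ s : List ℕ, Quotient.mk (List.IsRotated.setoid ℕ) s = x ∧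
    MemN n k l s ∧ oddCount s = m ∧ IsPrimitiveWord s}

/-- Flip the parity of a letter: `2t ↦ 2t+1`, `2t+1 ↦ 2t`. -/
def flip1 (x : ℕ) : ℕ := if x % 2 = 1 then x - 1 else x + 1

lemma flip1_flip1 (x : ℕ) : flip1 (flip1 x) = x := by
  unfold flip1
  rcases Nat.mod_two_eq_zero_or_one x with h | h
  · have e : (if x % 2 = 1 then x - 1 else x + 1) = x + 1 := if_neg (by omega)
    rw [e, if_pos (by omega)]
    omega
  · have e : (if x % 2 = 1 then x - 1 else x + 1) = x - 1 := if_pos h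
    rw [e, if_neg (by omega)]
    omega

lemma flip1_injective : Function.Injective flip1 :=
  Function.LeftInverse.injective flip1_flip1

lemma map_flip1_flip1 (s : List ℕ) : (s.map flip1).map flip1 = s := by
  rw [List.map_map]
  simp [Function.comp_def, flip1_flip1]

lemma isPrim_map_flip1 {s : List ℕ} (h : IsPrimitiveWord s) :
    IsPrimitiveWord (s.map flip1) := by
  rintro ⟨q, r, hr, hlen, heq⟩
  apply h
  refine ⟨q.map flip1, r, hr, by simpa using hlen, ?_⟩
  have := congrArg (List.map flip1) heq
  rw [map_flip1_flip1] at this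
  rw [this, List.map_flatten, List.map_replicate]

lemma oddCount_map_flip1 (s : List ℕ) :
    oddCount (s.map flip1) = s.length - oddCount s := by
  unfold oddCount
  rw [List.countP_map]
  have h1 : List.countP ((fun x => decide (x % 2 = 1)) ∘ flip1) s
      = List.countP (fun x => decide ¬ (x % 2 = 1)) s := by
    apply List.countP_congr
    intro x _
    simp only [Function.comp, flip1, decide_eq_true_eq, decide_not, Bool.not_eq_true',
      decide_eq_false_iff_not]
    rcases Nat.mod_two_eq_zero_or_one x with h | h <;> simp [h] <;> omega
  rw [h1]
  have := s.length_eq_countP_add_countP (fun x => decide (x % 2 = 1))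
  simp only [decide_eq_true_eq] at this
  omega

lemma memN_map_flip1 {n k : ℕ} {l s : List ℕ} (h : MemN n k l s)
    (hp : IsPrimitiveWord s) : MemN n k l (s.map flip1) := by
  obtain ⟨hlen, hbd, hcnt, -⟩ := h
  refine ⟨by simpa using hlen, ?_, ?_, Or.inl (isPrim_map_flip1 hp)⟩
  · intro c hc
    simp only [List.mem_map] at hc
    obtain ⟨a, ha, rfl⟩ := hc
    have := hbd a ha
    unfold flip1
    rcases Nat.mod_two_eq_zero_or_one a with h | h <;> simp [h] <;> omega
  · intro t ht
    have e1 : flip1 (2 * t + 1) = 2 * t := by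
      unfold flip1; rw [if_pos (by omega)]; omega
    have e2 : flip1 (2 * t) = 2 * t + 1 := by
      unfold flip1; rw [if_neg (by omega)]
    have h1 := List.count_map_of_injective s flip1 flip1_injective (2 * t + 1)
    have h2 := List.count_map_of_injective s flip1 flip1_injective (2 * t)
    rw [e1] at h1
    rw [e2] at h2
    rw [h1, h2, Nat.add_comm]
    exact hcnt t ht

/-- The flip map on necklaces. -/
def flipNeck : Necklace → Necklace :=
  Quotient.map (List.map flip1) (fun _ _ h => h.map flip1)

lemma flipNeck_mk (s : List ℕ) :
    flipNeck (Quotient.mk (List.IsRotated.setoid ℕ) s)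
      = Quotient.mk (List.IsRotated.setoid ℕ) (s.map flip1) := rfl

lemma flipNeck_flipNeck (x : Necklace) : flipNeck (flipNeck x) = x := by
  induction x using Quotient.inductionOn with
  | h s => rw [flipNeck_mk, flipNeck_mk, map_flip1_flip1]

/-- For every composition `λ` of `n` and every `0 ≤ m ≤ n`, `L̄_λ(m) = L̄_λ(n-m)`. -/
theorem cardLbar_symm (n k m : ℕ) (l : List ℕ)
    (hk : l.length = k) (hpos : ∀ x ∈ l, 0 < x) (hsum : l.sum = n) (hm : m ≤ n) :
    cardLbar n k l m = cardLbar n k l (n - m) := by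
  unfold cardLbar
  apply Nat.card_congr
  have key : ∀ m' m'' : ℕ, (∀ s : List ℕ, MemN n k l s → oddCount s = m' →
        s.length - oddCount s = m'') →
      ∀ x : Necklace, (∃ s : List ℕ, Quotient.mk (List.IsRotated.setoid ℕ) s = x ∧
        MemN n k l s ∧ oddCount s = m' ∧ IsPrimitiveWord s) →
      (∃ s : List ℕ, Quotient.mk (List.IsRotated.setoid ℕ) s = flipNeck x ∧
        MemN n k l s ∧ oddCount s = m'' ∧ IsPrimitiveWord s) := by
    rintro m' m'' hcc x ⟨s, rfl, hmem, hodd, hprim⟩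
    exact ⟨s.map flip1, (flipNeck_mk s).symm,
      memN_map_flip1 hmem hprim,
      by rw [oddCount_map_flip1]; exact hcc s hmem hodd,
      isPrim_map_flip1 hprim⟩
  refine ⟨fun ⟨x, hx⟩ => ⟨flipNeck x, key m (n - m) ?_ x hx⟩,
    fun ⟨x, hx⟩ => ⟨flipNeck x, key (n - m) m ?_ x hx⟩,
    fun ⟨x, hx⟩ => Subtype.ext (flipNeck_flipNeck x),
    fun ⟨x, hx⟩ => Subtype.ext (flipNeck_flipNeck x)⟩
  · rintro s ⟨hlen, -⟩ hodd; omega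
  · rintro s ⟨hlen, -⟩ hodd
    have : oddCount s ≤ s.length := List.countP_le_length
    omega
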